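/- arXiv:2307.14467 — 2 statements merged into one kernel-verified Lean document; each statement's English description precedes it below -/
import Mathlib

section
/- Let Φ = {−1,1} and let the kernels ζ_n(σ_n, h) be defined by ζ_n(σ_n,h) = Z_n^h⁻¹ exp(Jβ Σ_{⟨x,y⟩, x,y ∈ V_n} ρ(σ_n(x),σ_n(y)) + Σ_{x ∈ W_n} ρ(σ_n(x), h_x)). Then the consistency condition Σ_{ω_n ∈ Φ^{W_n}} ζ_n(σ_{n−1}ω_n, h) = ζ_{n−1}(σ_{n−1}, h) holds for all n and all σ_{n−1} if and only if for every vertex x, ∏_{y ∈ S(x)} [Σ_{u ∈ {−1,1}} exp(Jβ ρ(1,u) + ρ(u,h_y))] / [Σ_{u ∈ {−1,1}} exp(Jβ ρ(−1,u) + ρ(u,h_y))] = exp(ρ(1,h_x) − ρ(−1,h_x)). -/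
open scoped BigOperators

variable {V : Type*} [DecidableEq V]

/-- Spheres `Wₙ` around the root of a rooted tree with children map `S`. -/
def treeSphere (root : V) (S : V → Finset V) : ℕ → Finset V
  | 0 => {root}
  | n + 1 => (treeSphere root S n).biUnion S

/-- Balls `Vₙ = W₀ ∪ ⋯ ∪ Wₙ`. -/
def treeBall (root : V) (S : V → Finset V) (n : ℕ) : Finset V :=
  (Finset.range (n + 1)).biUnion (treeSphere root S)

/-- The Cayley tree of order `k`, rooted at `root`, with children map `S`. -/
structure CayleyTree (V : Type*) [DecidableEq V] (k : ℕ) where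
  root : V
  S : V → Finset V
  card_S_root : (S root).card = k + 1
  card_S : ∀ x, x ≠ root → (S x).card = k
  root_not_child : ∀ x, root ∉ S x
  parent_unique : ∀ y, y ≠ root → ∃! x, y ∈ S x
  reach : ∀ y, ∃ n, y ∈ treeSphere root S n

variable {k : ℕ} (T : CayleyTree V k)

/-- The exponent of the kernel (2.6):
`Jβ Σ_{⟨x,y⟩ ⊆ Vₙ} ρ(σ(x),σ(y)) + Σ_{x ∈ Wₙ} ρ(σ(x), h_x)`;
spins take values in `{-1,1} ≃ ℤˣ`. -/
noncomputable def kernelEnergy (J β : ℝ) (ρ : ℤˣ → ℝ → ℝ) (h : V → ℝ)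
    (n : ℕ) (σ : V → ℤˣ) : ℝ :=
  J * β * ∑ x ∈ treeBall T.root T.S n, ∑ y ∈ T.S x ∩ treeBall T.root T.S n,
      ρ (σ x) ((σ y : ℤ) : ℝ)
    + ∑ x ∈ treeSphere T.root T.S n, ρ (σ x) (h x)

/-- Extend a configuration on the ball `Vₙ` to all of `V` (by `+1` outside;
the energy only depends on coordinates in `Vₙ`). -/
def extendBall (n : ℕ) (τ : treeBall T.root T.S n → ℤˣ) : V → ℤˣ :=
  fun x => if hx : x ∈ treeBall T.root T.S n then τ ⟨x, hx⟩ else 1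

/-- The partition function `Z_n^h`. -/
noncomputable def partFn (J β : ℝ) (ρ : ℤˣ → ℝ → ℝ) (h : V → ℝ) (n : ℕ) : ℝ :=
  ∑ τ : treeBall T.root T.S n → ℤˣ,
    Real.exp (kernelEnergy T J β ρ h n (extendBall T n τ))

/-- The kernel (2.6): `ζₙ(σₙ, h) = (Z_n^h)⁻¹ exp( … )`. -/
noncomputable def kernel (J β : ℝ) (ρ : ℤˣ → ℝ → ℝ) (h : V → ℝ) (n : ℕ)
    (τ : treeBall T.root T.S n → ℤˣ) : ℝ :=
  Real.exp (kernelEnergy T J β ρ h n (extendBall T n τ)) / partFn T J β ρ h n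

/-- The configuration on `V_{n+1}` built from `σ` on `Vₙ` and `ω` on the
sphere `W_{n+1}`. -/
def mergeConf (n : ℕ) (σ : treeBall T.root T.S n → ℤˣ)
    (ω : treeSphere T.root T.S (n + 1) → ℤˣ) :
    treeBall T.root T.S (n + 1) → ℤˣ :=
  fun x => if hx : (x : V) ∈ treeBall T.root T.S n then σ ⟨x, hx⟩
    else if hx' : (x : V) ∈ treeSphere T.root T.S (n + 1) then ω ⟨x, hx'⟩
    else 1

lemma mem_treeBall {root : V} {S : V → Finset V} {n : ℕ} {x : V} :
    x ∈ treeBall root S n ↔ ∃ m ≤ n, x ∈ treeSphere root S m := by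
  simp [treeBall, Finset.mem_biUnion, Nat.lt_succ_iff]

lemma sphere_subset_ball {root : V} {S : V → Finset V} {n : ℕ} :
    treeSphere root S n ⊆ treeBall root S n :=
  fun x hx => mem_treeBall.2 ⟨n, le_rfl, hx⟩

lemma ball_subset_succ {root : V} {S : V → Finset V} {n : ℕ} :
    treeBall root S n ⊆ treeBall root S (n + 1) := by
  intro x hx
  rcases mem_treeBall.1 hx with ⟨m, hm, hx⟩
  exact mem_treeBall.2 ⟨m, hm.trans (Nat.le_succ n), hx⟩

lemma sphere_subset_ball_succ {root : V} {S : V → Finset V} {n : ℕ} :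
    treeSphere root S (n + 1) ⊆ treeBall root S (n + 1) := sphere_subset_ball

variable {T}

lemma ne_root_of_child {x y : V} (hy : y ∈ T.S x) : y ≠ T.root :=
  fun hyr => T.root_not_child x (hyr ▸ hy)

lemma sphere_eq_of_mem : ∀ {m n : ℕ} {y : V}, y ∈ treeSphere T.root T.S m →
    y ∈ treeSphere T.root T.S n → m = n := by
  intro m
  induction m with
  | zero =>
    intro n y hm hn
    cases n with
    | zero => rfl
    | succ n =>
      simp only [treeSphere, Finset.mem_singleton] at hm
      rcases Finset.mem_biUnion.1 hn with ⟨x, _, hx⟩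
      exact absurd (hm ▸ hx) (T.root_not_child x)
  | succ m ih =>
    intro n y hm hn
    rcases Finset.mem_biUnion.1 hm with ⟨x, hxm, hyx⟩
    cases n with
    | zero =>
      simp only [treeSphere, Finset.mem_singleton] at hn
      exact absurd (hn ▸ hyx) (T.root_not_child x)
    | succ n =>
      rcases Finset.mem_biUnion.1 hn with ⟨x', hxn, hyx'⟩
      rcases T.parent_unique y (ne_root_of_child hyx) with ⟨z, _, hz⟩
      have : x = x' := (hz x hyx).trans (hz x' hyx').symm
      exact congrArg Nat.succ (ih (this ▸ hxm) hxn)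

lemma disjoint_ball_sphere {n : ℕ} :
    Disjoint (treeBall T.root T.S n) (treeSphere T.root T.S (n + 1)) := by
  rw [Finset.disjoint_left]
  intro x hx hx'
  rcases mem_treeBall.1 hx with ⟨m, hm, hxm⟩
  have := sphere_eq_of_mem hxm hx'
  omega

lemma ball_succ {n : ℕ} :
    treeBall T.root T.S (n + 1) = treeBall T.root T.S n ∪ treeSphere T.root T.S (n + 1) := by
  ext x
  rw [Finset.mem_union, mem_treeBall, mem_treeBall]
  constructor
  · rintro ⟨m, hm, hx⟩
    rcases Nat.lt_or_ge m (n + 1) with hlt | hge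
    · exact Or.inl ⟨m, Nat.lt_succ_iff.1 hlt, hx⟩
    · have : m = n + 1 := by omega
      exact Or.inr (this ▸ hx)
  · rintro (⟨m, hm, hx⟩ | hx)
    · exact ⟨m, by omega, hx⟩
    · exact ⟨n + 1, le_rfl, hx⟩

lemma disjoint_children {x x' : V} (hne : x ≠ x') : Disjoint (T.S x) (T.S x') := by
  rw [Finset.disjoint_left]
  intro y hy hy'
  rcases T.parent_unique y (ne_root_of_child hy) with ⟨z, _, hz⟩
  exact hne ((hz x hy).trans (hz x' hy').symm)

lemma child_mem_sphere {m : ℕ} {x y : V} (hx : x ∈ treeSphere T.root T.S m)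
    (hy : y ∈ T.S x) : y ∈ treeSphere T.root T.S (m + 1) :=
  Finset.mem_biUnion.2 ⟨x, hx, hy⟩

lemma children_inter_ball_of_sphere {n : ℕ} {x : V}
    (hx : x ∈ treeSphere T.root T.S (n + 1)) :
    T.S x ∩ treeBall T.root T.S (n + 1) = ∅ := by
  rw [Finset.eq_empty_iff_forall_notMem]
  intro y hy
  rw [Finset.mem_inter] at hy
  rcases mem_treeBall.1 hy.2 with ⟨m, hm, hym⟩
  have := sphere_eq_of_mem (child_mem_sphere hx hy.1) hym
  omega

lemma children_inter_ball_succ {n : ℕ} {x : V} (hx : x ∈ treeBall T.root T.S n) :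
    T.S x ∩ treeBall T.root T.S (n + 1) = T.S x := by
  rcases mem_treeBall.1 hx with ⟨m, hm, hxm⟩
  apply Finset.inter_eq_left.2
  intro y hy
  exact mem_treeBall.2 ⟨m + 1, by omega, child_mem_sphere hxm hy⟩

lemma children_inter_sphere_of_mem {n : ℕ} {x : V} (hx : x ∈ treeSphere T.root T.S n) :
    T.S x ∩ treeSphere T.root T.S (n + 1) = T.S x :=
  Finset.inter_eq_left.2 (fun y hy => child_mem_sphere hx hy)

lemma children_inter_sphere_of_notMem {n : ℕ} {x : V} (hx : x ∈ treeBall T.root T.S n)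
    (hx' : x ∉ treeSphere T.root T.S n) :
    T.S x ∩ treeSphere T.root T.S (n + 1) = ∅ := by
  rcases mem_treeBall.1 hx with ⟨m, hm, hxm⟩
  rw [Finset.eq_empty_iff_forall_notMem]
  intro y hy
  rw [Finset.mem_inter] at hy
  have := sphere_eq_of_mem (child_mem_sphere hxm hy.1) hy.2
  have hmn : m = n := by omega
  exact hx' (hmn ▸ hxm)

lemma pairwiseDisjoint_children {s : Finset V} :
    (↑s : Set V).PairwiseDisjoint T.S :=
  fun _ _ _ _ hne => disjoint_children hne

lemma mem_sphere_of_mem_ball_succ {root : V} {S : V → Finset V} {n : ℕ} {x : V}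
    (hx : x ∈ treeBall root S (n + 1)) (hx' : x ∉ treeBall root S n) :
    x ∈ treeSphere root S (n + 1) := by
  rcases mem_treeBall.1 hx with ⟨m, hm, hs⟩
  by_cases hmn : m ≤ n
  · exact absurd (mem_treeBall.2 ⟨m, hmn, hs⟩) hx'
  · have : m = n + 1 := by omega
    exact this ▸ hs

variable (T)

noncomputable def parentV (y : V) : V :=
  if hy : y = T.root then T.root else (T.parent_unique y hy).choose

lemma parentV_eq {x y : V} (hy : y ∈ T.S x) : parentV T y = x := by
  have hyr := ne_root_of_child hy
  rw [parentV, dif_neg hyr]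
  exact ((T.parent_unique y hyr).choose_spec.2 x hy).symm

noncomputable def Afun (J β : ℝ) (ρ : ℤˣ → ℝ → ℝ) (hh : ℝ) (s : ℤˣ) : ℝ :=
  ∑ u : ℤˣ, Real.exp (J * β * ρ s ((u : ℤ) : ℝ) + ρ u hh)

lemma Afun_pos (J β : ℝ) (ρ : ℤˣ → ℝ → ℝ) (hh : ℝ) (s : ℤˣ) :
    0 < Afun J β ρ hh s :=
  Finset.sum_pos (fun u _ => Real.exp_pos _) Finset.univ_nonempty

noncomputable def Rfun (J β : ℝ) (ρ : ℤˣ → ℝ → ℝ) (h : V → ℝ) (x : V) (s : ℤˣ) : ℝ :=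
  (∏ y ∈ T.S x, Afun J β ρ (h y) s) / Real.exp (ρ s (h x))

lemma Rfun_pos (J β : ℝ) (ρ : ℤˣ → ℝ → ℝ) (h : V → ℝ) (x : V) (s : ℤˣ) :
    0 < Rfun T J β ρ h x s :=
  div_pos (Finset.prod_pos fun y _ => Afun_pos J β ρ (h y) s) (Real.exp_pos _)

lemma partFn_pos (J β : ℝ) (ρ : ℤˣ → ℝ → ℝ) (h : V → ℝ) (n : ℕ) :
    0 < partFn T J β ρ h n :=
  Finset.sum_pos (fun τ _ => Real.exp_pos _) Finset.univ_nonempty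

lemma extendBall_mem (n : ℕ) (τ : treeBall T.root T.S n → ℤˣ) {x : V}
    (hx : x ∈ treeBall T.root T.S n) : extendBall T n τ x = τ ⟨x, hx⟩ :=
  dif_pos hx

lemma merge_on_ball {n : ℕ} {σ : treeBall T.root T.S n → ℤˣ}
    {ω : treeSphere T.root T.S (n+1) → ℤˣ} {x : V} (hx : x ∈ treeBall T.root T.S n) :
    extendBall T (n+1) (mergeConf T n σ ω) x = extendBall T n σ x := by
  rw [extendBall_mem T _ _ (ball_subset_succ hx), extendBall_mem T _ _ hx]
  simp only [mergeConf, hx, dif_pos]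

lemma merge_on_sphere {n : ℕ} {σ : treeBall T.root T.S n → ℤˣ}
    {ω : treeSphere T.root T.S (n+1) → ℤˣ} {y : V} (hy : y ∈ treeSphere T.root T.S (n+1)) :
    extendBall T (n+1) (mergeConf T n σ ω) y = ω ⟨y, hy⟩ := by
  have hnb : y ∉ treeBall T.root T.S n := Finset.disjoint_right.1 disjoint_ball_sphere hy
  rw [extendBall_mem T _ _ (sphere_subset_ball_succ hy)]
  simp only [mergeConf, hnb, hy, dif_neg, dif_pos, not_false_iff]

lemma energy_merge (J β : ℝ) (ρ : ℤˣ → ℝ → ℝ) (h : V → ℝ) (n : ℕ)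
    (σ : treeBall T.root T.S n → ℤˣ) (ω : treeSphere T.root T.S (n+1) → ℤˣ) :
    kernelEnergy T J β ρ h (n+1) (extendBall T (n+1) (mergeConf T n σ ω)) =
      J * β * (∑ x ∈ treeBall T.root T.S n, ∑ y ∈ T.S x ∩ treeBall T.root T.S n,
          ρ (extendBall T n σ x) ((extendBall T n σ y : ℤ) : ℝ))
        + ∑ x ∈ treeSphere T.root T.S n, ∑ y ∈ T.S x,
            (J * β * ρ (extendBall T n σ x)
                ((extendBall T (n+1) (mergeConf T n σ ω) y : ℤ) : ℝ)
              + ρ (extendBall T (n+1) (mergeConf T n σ ω) y) (h y)) := by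
  set f := extendBall T (n+1) (mergeConf T n σ ω) with hf
  set s := extendBall T n σ with hs
  have hedge :
      (∑ x ∈ treeBall T.root T.S (n+1), ∑ y ∈ T.S x ∩ treeBall T.root T.S (n+1),
          ρ (f x) ((f y : ℤ) : ℝ)) =
        (∑ x ∈ treeBall T.root T.S n, ∑ y ∈ T.S x ∩ treeBall T.root T.S n,
            ρ (s x) ((s y : ℤ) : ℝ))
          + ∑ x ∈ treeSphere T.root T.S n, ∑ y ∈ T.S x, ρ (s x) ((f y : ℤ) : ℝ) := by
    nth_rewrite 1 [ball_succ]
    rw [Finset.sum_union disjoint_ball_sphere]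
    have h2 : (∑ x ∈ treeSphere T.root T.S (n+1),
        ∑ y ∈ T.S x ∩ treeBall T.root T.S (n+1), ρ (f x) ((f y : ℤ) : ℝ)) = 0 := by
      refine Finset.sum_eq_zero fun x hx => ?_
      rw [children_inter_ball_of_sphere hx, Finset.sum_empty]
    rw [h2, add_zero]
    have h1 : ∀ x ∈ treeBall T.root T.S n,
        (∑ y ∈ T.S x ∩ treeBall T.root T.S (n+1), ρ (f x) ((f y : ℤ) : ℝ)) =
          (∑ y ∈ T.S x ∩ treeBall T.root T.S n, ρ (s x) ((s y : ℤ) : ℝ))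
            + ∑ y ∈ T.S x ∩ treeSphere T.root T.S (n+1), ρ (s x) ((f y : ℤ) : ℝ) := by
      intro x hx
      have hsplit : T.S x ∩ treeBall T.root T.S (n+1) =
          (T.S x ∩ treeBall T.root T.S n) ∪ (T.S x ∩ treeSphere T.root T.S (n+1)) := by
        rw [ball_succ, Finset.inter_union_distrib_left]
      rw [hsplit, Finset.sum_union
        (disjoint_ball_sphere.mono Finset.inter_subset_right Finset.inter_subset_right)]
      congr 1
      · exact Finset.sum_congr rfl fun y hy => by
          rw [hf, hs, merge_on_ball T hx, merge_on_ball T (Finset.mem_inter.1 hy).2]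
      · exact Finset.sum_congr rfl fun y _ => by rw [hf, hs, merge_on_ball T hx]
    rw [Finset.sum_congr rfl h1, Finset.sum_add_distrib]
    congr 1
    rw [← Finset.sum_subset sphere_subset_ball (fun x hx hx' => by
      rw [children_inter_sphere_of_notMem hx hx', Finset.sum_empty])]
    exact Finset.sum_congr rfl fun x hx => by rw [children_inter_sphere_of_mem hx]
  have hbdy : (∑ x ∈ treeSphere T.root T.S (n+1), ρ (f x) (h x)) =
      ∑ x ∈ treeSphere T.root T.S n, ∑ y ∈ T.S x, ρ (f y) (h y) := by
    show (∑ x ∈ (treeSphere T.root T.S n).biUnion T.S, ρ (f x) (h x)) = _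
    exact Finset.sum_biUnion pairwiseDisjoint_children
  show J * β * (∑ x ∈ treeBall T.root T.S (n+1), ∑ y ∈ T.S x ∩ treeBall T.root T.S (n+1),
      ρ (f x) ((f y : ℤ) : ℝ)) + (∑ x ∈ treeSphere T.root T.S (n+1), ρ (f x) (h x)) = _
  rw [hedge, hbdy, mul_add, add_assoc]
  congr 1
  rw [Finset.mul_sum, ← Finset.sum_add_distrib]
  refine Finset.sum_congr rfl fun x hx => ?_
  rw [Finset.mul_sum, ← Finset.sum_add_distrib]

lemma sum_exp_merge (J β : ℝ) (ρ : ℤˣ → ℝ → ℝ) (h : V → ℝ) (n : ℕ)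
    (σ : treeBall T.root T.S n → ℤˣ) :
    (∑ ω : treeSphere T.root T.S (n+1) → ℤˣ,
        Real.exp (kernelEnergy T J β ρ h (n+1) (extendBall T (n+1) (mergeConf T n σ ω))))
    = Real.exp (kernelEnergy T J β ρ h n (extendBall T n σ)) *
        ∏ x ∈ treeSphere T.root T.S n, Rfun T J β ρ h x (extendBall T n σ x) := by
  set s := extendBall T n σ with hs
  set G : V → ℤˣ → ℝ := fun y u =>
    Real.exp (J * β * ρ (s (parentV T y)) ((u : ℤ) : ℝ) + ρ u (h y)) with hG
  set E0 : ℝ := J * β * (∑ x ∈ treeBall T.root T.S n, ∑ y ∈ T.S x ∩ treeBall T.root T.S n,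
      ρ (s x) ((s y : ℤ) : ℝ)) with hE0
  have step1 : ∀ ω : treeSphere T.root T.S (n+1) → ℤˣ,
      Real.exp (kernelEnergy T J β ρ h (n+1) (extendBall T (n+1) (mergeConf T n σ ω)))
        = Real.exp E0 * ∏ a : treeSphere T.root T.S (n+1), G (a : V) (ω a) := by
    intro ω
    rw [energy_merge, Real.exp_add]
    congr 1
    rw [Real.exp_sum]
    have hterm : ∀ x ∈ treeSphere T.root T.S n,
        Real.exp (∑ y ∈ T.S x, (J * β * ρ (s x)
            ((extendBall T (n+1) (mergeConf T n σ ω) y : ℤ) : ℝ)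
          + ρ (extendBall T (n+1) (mergeConf T n σ ω) y) (h y)))
        = ∏ y ∈ T.S x, (fun y => if hy : y ∈ treeSphere T.root T.S (n+1)
            then G y (ω ⟨y, hy⟩) else 1) y := by
      intro x hx
      rw [Real.exp_sum]
      refine Finset.prod_congr rfl fun y hy => ?_
      have hy1 : y ∈ treeSphere T.root T.S (n+1) := child_mem_sphere hx hy
      rw [merge_on_sphere T hy1]
      simp only [hy1, dif_pos, hG, parentV_eq T hy]
    rw [Finset.prod_congr rfl hterm, ← Finset.prod_biUnion pairwiseDisjoint_children]
    show (∏ y ∈ treeSphere T.root T.S (n+1), (fun y =>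
        if hy : y ∈ treeSphere T.root T.S (n+1) then G y (ω ⟨y, hy⟩) else 1) y) = _
    rw [← Finset.prod_attach (treeSphere T.root T.S (n+1))]
    rw [Finset.univ_eq_attach]
    refine Finset.prod_congr rfl fun a _ => ?_
    simp only [a.2, dif_pos]
  rw [Finset.sum_congr rfl (fun ω _ => step1 ω), ← Finset.mul_sum]
  have step2 : (∑ ω : treeSphere T.root T.S (n+1) → ℤˣ,
      ∏ a : treeSphere T.root T.S (n+1), G (a : V) (ω a))
      = ∏ a : treeSphere T.root T.S (n+1), ∑ u : ℤˣ, G (a : V) u := by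
    rw [Finset.prod_univ_sum
      (fun _ : treeSphere T.root T.S (n+1) => (Finset.univ : Finset ℤˣ))
      (fun a u => G (a : V) u), Fintype.piFinset_univ]
  rw [step2]
  have step3 : (∏ a : treeSphere T.root T.S (n+1), ∑ u : ℤˣ, G (a : V) u)
      = ∏ x ∈ treeSphere T.root T.S n, (Rfun T J β ρ h x (s x) * Real.exp (ρ (s x) (h x))) := by
    rw [Finset.prod_coe_sort (treeSphere T.root T.S (n+1))
      (fun y => ∑ u : ℤˣ, G y u)]
    show (∏ y ∈ (treeSphere T.root T.S n).biUnion T.S,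
        ∑ u : ℤˣ, G y u) = _
    rw [Finset.prod_biUnion pairwiseDisjoint_children]
    refine Finset.prod_congr rfl fun x hx => ?_
    have hGA : ∀ y ∈ T.S x, (∑ u : ℤˣ, G y u) = Afun J β ρ (h y) (s x) := by
      intro y hy
      simp only [hG, Afun, parentV_eq T hy]
    rw [Finset.prod_congr rfl hGA, Rfun, div_mul_cancel₀ _ (Real.exp_ne_zero _)]
  rw [step3, Finset.prod_mul_distrib, ← Real.exp_sum, ← mul_assoc, mul_comm (Real.exp E0),
    mul_assoc, ← Real.exp_add]
  show _ = Real.exp (kernelEnergy T J β ρ h n s) * _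
  rw [kernelEnergy, ← hE0]
  ring

lemma merge_bijective (n : ℕ) :
    Function.Bijective (fun p : (treeBall T.root T.S n → ℤˣ) ×
        (treeSphere T.root T.S (n+1) → ℤˣ) => mergeConf T n p.1 p.2) := by
  constructor
  · rintro ⟨σ, ω⟩ ⟨σ', ω'⟩ hp
    simp only [Prod.mk.injEq]
    constructor
    · funext x
      have hx := congrFun hp ⟨(x : V), ball_subset_succ x.2⟩
      simpa [mergeConf, x.2] using hx
    · funext y
      have hnb : (y : V) ∉ treeBall T.root T.S n :=
        Finset.disjoint_right.1 disjoint_ball_sphere y.2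
      have hy := congrFun hp ⟨(y : V), sphere_subset_ball_succ y.2⟩
      simpa [mergeConf, hnb, y.2] using hy
  · intro τ
    refine ⟨⟨fun x => τ ⟨(x : V), ball_subset_succ x.2⟩,
      fun y => τ ⟨(y : V), sphere_subset_ball_succ y.2⟩⟩, ?_⟩
    funext z
    by_cases hz : (z : V) ∈ treeBall T.root T.S n
    · simp [mergeConf, hz]
    · have hz' : (z : V) ∈ treeSphere T.root T.S (n+1) :=
        mem_sphere_of_mem_ball_succ z.2 hz
      simp [mergeConf, hz, hz']

lemma partFn_succ (J β : ℝ) (ρ : ℤˣ → ℝ → ℝ) (h : V → ℝ) (n : ℕ) :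
    partFn T J β ρ h (n+1) = ∑ σ : treeBall T.root T.S n → ℤˣ,
      Real.exp (kernelEnergy T J β ρ h n (extendBall T n σ)) *
        ∏ x ∈ treeSphere T.root T.S n, Rfun T J β ρ h x (extendBall T n σ x) := by
  rw [partFn]
  refine ((Fintype.sum_bijective _ (merge_bijective T n)
      (fun p => Real.exp (kernelEnergy T J β ρ h (n+1)
        (extendBall T (n+1) (mergeConf T n p.1 p.2))))
      _ (fun p => rfl)).symm).trans ?_
  rw [Fintype.sum_prod_type]
  exact Finset.sum_congr rfl fun σ _ => sum_exp_merge T J β ρ h n σ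

lemma cond_iff (J β : ℝ) (ρ : ℤˣ → ℝ → ℝ) (h : V → ℝ) (x : V) :
    ((∏ y ∈ T.S x,
        (∑ u : ℤˣ, Real.exp (J * β * ρ 1 ((u : ℤ) : ℝ) + ρ u (h y))) /
          (∑ u : ℤˣ, Real.exp (J * β * ρ (-1) ((u : ℤ) : ℝ) + ρ u (h y)))) =
      Real.exp (ρ 1 (h x) - ρ (-1) (h x))) ↔
    Rfun T J β ρ h x 1 = Rfun T J β ρ h x (-1) := by
  have hA : ∀ t : ℤˣ, (0:ℝ) < ∏ y ∈ T.S x, Afun J β ρ (h y) t :=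
    fun t => Finset.prod_pos fun y _ => Afun_pos J β ρ (h y) t
  show ((∏ y ∈ T.S x, Afun J β ρ (h y) 1 / Afun J β ρ (h y) (-1)) = _) ↔ _
  rw [Finset.prod_div_distrib, Real.exp_sub, Rfun, Rfun,
    div_eq_div_iff (hA (-1)).ne' (Real.exp_pos _).ne',
    div_eq_div_iff (Real.exp_pos _).ne' (Real.exp_pos _).ne']
  exact ⟨fun H => H.trans (mul_comm _ _), fun H => H.trans (mul_comm _ _)⟩

/-- Theorem 2.1 (compatibility criterion): the kernels (2.6) are consistent,
`Σ_{ωₙ} ζₙ(σ_{n-1} ωₙ, h) = ζ_{n-1}(σ_{n-1}, h)`, if and only if for every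
vertex `x`,
`∏_{y ∈ S(x)} [Σ_u exp(Jβ ρ(1,u) + ρ(u,h_y))]/[Σ_u exp(Jβ ρ(-1,u) + ρ(u,h_y))]
 = exp(ρ(1,h_x) − ρ(-1,h_x))`. -/
theorem kernels_compatible_iff (J β : ℝ) (ρ : ℤˣ → ℝ → ℝ) (h : V → ℝ) :
    (∀ (n : ℕ) (σ : treeBall T.root T.S n → ℤˣ),
        (∑ ω : treeSphere T.root T.S (n + 1) → ℤˣ,
            kernel T J β ρ h (n + 1) (mergeConf T n σ ω)) =
          kernel T J β ρ h n σ) ↔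
      ∀ x : V,
        (∏ y ∈ T.S x,
            (∑ u : ℤˣ, Real.exp (J * β * ρ 1 ((u : ℤ) : ℝ) + ρ u (h y))) /
              (∑ u : ℤˣ, Real.exp (J * β * ρ (-1) ((u : ℤ) : ℝ) + ρ u (h y)))) =
          Real.exp (ρ 1 (h x) - ρ (-1) (h x)) := by

  constructor
  · intro hc x0
    have hZ : ∀ (n : ℕ) (σ : treeBall T.root T.S n → ℤˣ),
        (∏ x ∈ treeSphere T.root T.S n, Rfun T J β ρ h x (extendBall T n σ x)) *
          partFn T J β ρ h n = partFn T J β ρ h (n+1) := by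
      intro n σ
      have h1 := hc n σ
      simp only [kernel] at h1
      rw [← Finset.sum_div, sum_exp_merge,
        div_eq_div_iff (partFn_pos T J β ρ h (n+1)).ne' (partFn_pos T J β ρ h n).ne',
        mul_assoc] at h1
      exact mul_left_cancel₀ (Real.exp_ne_zero _) h1
    obtain ⟨n, hx0⟩ := T.reach x0
    have e1 := hZ n (fun _ => 1)
    have e2 := hZ n (fun z => if (z : V) = x0 then -1 else 1)
    have hprod : (∏ x ∈ treeSphere T.root T.S n,
          Rfun T J β ρ h x (extendBall T n (fun _ => 1) x)) =
        ∏ x ∈ treeSphere T.root T.S n,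
          Rfun T J β ρ h x (extendBall T n (fun z => if (z : V) = x0 then -1 else 1) x) :=
      mul_right_cancel₀ (partFn_pos T J β ρ h n).ne' (e1.trans e2.symm)
    have hL : (∏ x ∈ treeSphere T.root T.S n,
          Rfun T J β ρ h x (extendBall T n (fun _ => 1) x)) =
        ∏ x ∈ treeSphere T.root T.S n, Rfun T J β ρ h x 1 :=
      Finset.prod_congr rfl fun x hx => by
        rw [extendBall_mem T _ _ (sphere_subset_ball hx)]
    have hRR : (∏ x ∈ treeSphere T.root T.S n,
          Rfun T J β ρ h x (extendBall T n (fun z => if (z : V) = x0 then -1 else 1) x)) =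
        ∏ x ∈ treeSphere T.root T.S n, Rfun T J β ρ h x (if x = x0 then -1 else 1) :=
      Finset.prod_congr rfl fun x hx => by
        rw [extendBall_mem T _ _ (sphere_subset_ball hx)]
    rw [hL, hRR] at hprod
    rw [← Finset.mul_prod_erase _ _ hx0, ← Finset.mul_prod_erase _ _ hx0] at hprod
    have herase : (∏ x ∈ (treeSphere T.root T.S n).erase x0,
          Rfun T J β ρ h x (if x = x0 then -1 else 1)) =
        ∏ x ∈ (treeSphere T.root T.S n).erase x0, Rfun T J β ρ h x 1 :=
      Finset.prod_congr rfl fun x hx => by rw [if_neg (Finset.mem_erase.1 hx).1]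
    rw [herase, if_pos rfl] at hprod
    exact (cond_iff T J β ρ h x0).2 (mul_right_cancel₀
      (Finset.prod_pos fun x _ => Rfun_pos T J β ρ h x 1).ne' hprod)
  · intro hcond n σ
    have hR : ∀ (x : V) (u : ℤˣ), Rfun T J β ρ h x u = Rfun T J β ρ h x 1 := by
      intro x u
      rcases Int.units_eq_one_or u with rfl | rfl
      · rfl
      · exact ((cond_iff T J β ρ h x).1 (hcond x)).symm
    have hC : ∀ (m : ℕ) (τ : treeBall T.root T.S m → ℤˣ),
        (∏ x ∈ treeSphere T.root T.S m, Rfun T J β ρ h x (extendBall T m τ x)) =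
          ∏ x ∈ treeSphere T.root T.S m, Rfun T J β ρ h x 1 :=
      fun m τ => Finset.prod_congr rfl fun x _ => hR x _
    have hC0 : (∏ x ∈ treeSphere T.root T.S n, Rfun T J β ρ h x 1) ≠ 0 :=
      (Finset.prod_pos fun x _ => Rfun_pos T J β ρ h x 1).ne'
    have hZ : partFn T J β ρ h (n+1) =
        (∏ x ∈ treeSphere T.root T.S n, Rfun T J β ρ h x 1) * partFn T J β ρ h n := by
      rw [partFn_succ, partFn, Finset.mul_sum]
      exact Finset.sum_congr rfl fun τ _ => by rw [hC n τ]; ring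
    simp only [kernel]
    rw [← Finset.sum_div, sum_exp_merge, hC n σ, hZ,
      div_eq_div_iff (mul_ne_zero hC0 (partFn_pos T J β ρ h n).ne')
        (partFn_pos T J β ρ h n).ne']
    ring
end

section
/- For the Ising model on the Cayley tree of order k, the constant field h_x ≡ 0 always solves the consistency equation h_x = Σ_{y∈S(x)} f(h_y, θ); moreover a constant solution h_x ≡ h satisfies h = k·f(h,θ), and for θ = tanh(Jβ) with J, β > 0 and kθ > 1 (i.e. k·tanh(Jβ) > 1) the equation h = k·f(h,θ) has at least one strictly positive solution. -/
/-- The Cayley-tree Ising recursion function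
`f(h,θ) = ½ ln[((1+θ)e^{2h}+(1−θ))/((1−θ)e^{2h}+(1+θ))]`. -/
noncomputable def isingF (h θ : ℝ) : ℝ :=
  (1 / 2) * Real.log (((1 + θ) * Real.exp (2 * h) + (1 - θ)) /
    ((1 - θ) * Real.exp (2 * h) + (1 + θ)))

lemma isingF_zero (θ : ℝ) : isingF 0 θ = 0 := by
  simp [isingF, Real.exp_zero]

lemma tanh_mem (t : ℝ) (ht : 0 < t) : 0 < Real.tanh t ∧ Real.tanh t < 1 := by
  have hc : 0 < Real.cosh t := Real.cosh_pos t
  have hs : 0 < Real.sinh t := Real.sinh_pos_iff.2 ht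
  rw [Real.tanh_eq_sinh_div_cosh]
  constructor
  · positivity
  · rw [div_lt_one hc]
    have := Real.cosh_sub_sinh t
    nlinarith [Real.exp_pos (-t)]

/-- For the Ising model on a Cayley tree of order `k` with children map `S`:
the zero field always solves the consistency equation
`h_x = Σ_{y ∈ S(x)} f(h_y, θ)`; a constant field `h` solves it iff
`h = k·f(h,θ)` (whenever `|S(x)| = k`); and for `J, β > 0` with
`k·tanh(Jβ) > 1` the equation `h = k·f(h,θ)`, `θ = tanh(Jβ)`, has at least
one strictly positive solution. -/
theorem ising_constant_solutions (V : Type*) (S : V → Finset V) (k : ℕ)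
    (J β θ : ℝ) :
    (∀ x : V, (0 : ℝ) = ∑ y ∈ S x, isingF 0 θ) ∧
      (∀ (h : ℝ) (x : V), (S x).card = k →
        (∑ y ∈ S x, isingF h θ) = (k : ℝ) * isingF h θ) ∧
      (0 < J → 0 < β → 1 < (k : ℝ) * Real.tanh (J * β) →
        ∃ h : ℝ, 0 < h ∧ h = (k : ℝ) * isingF h (Real.tanh (J * β))) := by
  refine ⟨fun x => by simp [isingF_zero], fun h x hc => by
    simp [Finset.sum_const, hc, nsmul_eq_mul], ?_⟩
  intro hJ hβ hkθ
  set t := Real.tanh (J * β) with ht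
  obtain ⟨ht0, ht1⟩ := tanh_mem (J * β) (by positivity)
  -- N and D are positive for all h
  have hN : ∀ h : ℝ, 0 < (1 + t) * Real.exp (2 * h) + (1 - t) := by
    intro h; have := Real.exp_pos (2 * h); nlinarith
  have hD : ∀ h : ℝ, 0 < (1 - t) * Real.exp (2 * h) + (1 + t) := by
    intro h; have := Real.exp_pos (2 * h); nlinarith
  set g : ℝ → ℝ := fun h => (k : ℝ) * isingF h t - h with hg
  -- continuity of g
  have hcont : Continuous g := by
    apply Continuous.sub _ continuous_id
    apply Continuous.mul continuous_const
    apply Continuous.mul continuous_const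
    apply Continuous.log
    · exact (by continuity : Continuous fun h : ℝ =>
        (1 + t) * Real.exp (2 * h) + (1 - t)).div (by continuity)
        (fun h => (hD h).ne')
    · intro h
      exact (div_pos (hN h) (hD h)).ne'
  -- derivative of g at 0 is k*t - 1 > 0
  have hderiv : HasDerivAt g ((k : ℝ) * t - 1) 0 := by
    have he : HasDerivAt (fun h : ℝ => Real.exp (2 * h)) 2 0 := by
      simpa using (HasDerivAt.exp ((hasDerivAt_id (0:ℝ)).const_mul 2))
    have hNd : HasDerivAt (fun h : ℝ => (1 + t) * Real.exp (2 * h) + (1 - t))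
        ((1 + t) * 2) 0 := ((he.const_mul (1 + t)).add_const (1 - t))
    have hDd : HasDerivAt (fun h : ℝ => (1 - t) * Real.exp (2 * h) + (1 + t))
        ((1 - t) * 2) 0 := ((he.const_mul (1 - t)).add_const (1 + t))
    have hq : HasDerivAt (fun h : ℝ =>
        ((1 + t) * Real.exp (2 * h) + (1 - t)) /
        ((1 - t) * Real.exp (2 * h) + (1 + t))) (2 * t) 0 := by
      have := hNd.fun_div hDd (hD 0).ne'
      refine this.congr_deriv ?_
      simp [Real.exp_zero]
      ring
    have hlog : HasDerivAt (fun h : ℝ => Real.log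
        (((1 + t) * Real.exp (2 * h) + (1 - t)) /
        ((1 - t) * Real.exp (2 * h) + (1 + t)))) (2 * t) 0 := by
      have := hq.log (div_pos (hN 0) (hD 0)).ne'
      convert this using 1
      rw [show (2:ℝ) * 0 = 0 by ring, Real.exp_zero]
      field_simp
      ring
    have : HasDerivAt (fun h : ℝ => (k : ℝ) * isingF h t)
        ((k : ℝ) * ((1 / 2) * (2 * t))) 0 :=
      ((hlog.const_mul (1 / 2)).const_mul (k : ℝ))
    have := this.fun_sub (hasDerivAt_id 0)
    refine this.congr_deriv ?_
    ring
  have hg0 : g 0 = 0 := by simp [hg, isingF_zero]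
  -- exists small h > 0 with g h > 0
  have hpos : ∃ h : ℝ, 0 < h ∧ h < 1 ∧ 0 < g h := by
    have hslope := hasDerivAt_iff_tendsto_slope.1 hderiv
    have hsub : nhdsWithin (0 : ℝ) (Set.Ioi 0) ≤ nhdsWithin 0 {(0:ℝ)}ᶜ :=
      nhdsWithin_mono 0 (fun x hx => ne_of_gt hx)
    have hslope' := hslope.mono_left hsub
    have hev : ∀ᶠ h in nhdsWithin (0 : ℝ) (Set.Ioi 0), 0 < slope g 0 h := by
      have : Set.Ioi (0 : ℝ) ∈ nhds ((k : ℝ) * t - 1) :=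
        Ioi_mem_nhds (by linarith)
      exact hslope' this
    have hev2 : ∀ᶠ h in nhdsWithin (0 : ℝ) (Set.Ioi 0), h < 1 := by
      refine eventually_nhdsWithin_of_eventually_nhds ?_
      have : Set.Iio (1 : ℝ) ∈ nhds (0 : ℝ) := Iio_mem_nhds one_pos
      filter_upwards [this] with x hx using hx
    have hev3 : ∀ᶠ h in nhdsWithin (0 : ℝ) (Set.Ioi 0), h ∈ Set.Ioi (0:ℝ) :=
      eventually_mem_nhdsWithin
    obtain ⟨h, ⟨hs1, hlt⟩, hmem⟩ := ((hev.and hev2).and hev3).exists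
    refine ⟨h, hmem, hlt, ?_⟩
    have : slope g 0 h = g h / h := by simp [slope_def_field, hg0]
    rw [this] at hs1
    have := mul_pos hs1 (show (0:ℝ) < h from hmem)
    rwa [div_mul_cancel₀] at this
    exact (show (0:ℝ) < h from hmem).ne'
  obtain ⟨a, ha0, ha1, hga⟩ := hpos
  -- bound: isingF h t ≤ B, so g is negative at b := k*B + 1
  set B : ℝ := (1 / 2) * Real.log ((1 + t) / (1 - t)) with hB
  have hBpos : 0 < B := by
    apply mul_pos (by norm_num)
    apply Real.log_pos
    rw [lt_div_iff₀ (by linarith)]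
    linarith
  have hFle : ∀ h : ℝ, isingF h t ≤ B := by
    intro h
    apply mul_le_mul_of_nonneg_left _ (by norm_num : (0:ℝ) ≤ 1/2)
    apply Real.log_le_log (div_pos (hN h) (hD h))
    rw [div_le_div_iff₀ (hD h) (by linarith)]
    have := Real.exp_pos (2 * h)
    nlinarith
  set b : ℝ := (k : ℝ) * B + 1 with hb
  have hkpos : 0 < (k : ℝ) := by
    by_contra hk
    push_neg at hk
    nlinarith
  have hbpos : 1 ≤ b := by nlinarith
  have hgb : g b < 0 := by
    have := hFle b
    have : (k : ℝ) * isingF b t ≤ (k : ℝ) * B :=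
      mul_le_mul_of_nonneg_left this hkpos.le
    simp only [hg]
    linarith
  -- IVT on [a, b]
  have hab : a ≤ b := by linarith
  have hIVT := intermediate_value_Icc' hab (hcont.continuousOn)
  have h0mem : (0 : ℝ) ∈ Set.Icc (g b) (g a) := ⟨hgb.le, hga.le⟩
  obtain ⟨c, hc, hgc⟩ := hIVT h0mem
  refine ⟨c, lt_of_lt_of_le ha0 hc.1, ?_⟩
  have : (k : ℝ) * isingF c t - c = 0 := hgc
  linarith
end
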